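/- Let d be a natural number that is not a perfect square, a_0 = ⌊√d⌋, and T the minimal period of the sequence of partial quotients of √d (periodic from rank 1). Let (x_n) be the complete quotients of a_0 + √d. Then there exist T-periodic sequences (u_n) and (v_n) of positive integers such that for every n ≥ 0: x_n = (u_n + √d)/v_n, u_n ≤ a_0, and v_n divides d − u_n². -/

import Mathlib

/-- The complete quotients of a real number `x`:
`cq x 0 = x` and `cq x (n+1) = 1 / (cq x n - ⌊cq x n⌋)`. -/
noncomputable def cq (x : ℝ) : ℕ → ℝ
  | 0 => x
  | n + 1 => (Int.fract (cq x n))⁻¹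

/-- The partial quotients of a real number `x`: `pq x n = ⌊cq x n⌋`. -/
noncomputable def pq (x : ℝ) (n : ℕ) : ℤ := ⌊cq x n⌋

lemma cq_zero (x : ℝ) : cq x 0 = x := rfl
lemma cq_succ (x : ℝ) (n : ℕ) : cq x (n + 1) = (Int.fract (cq x n))⁻¹ := rfl

lemma Irrational.cq' {y : ℝ} (hy : Irrational y) (n : ℕ) : Irrational (cq y n) := by
  induction n with
  | zero => exact hy
  | succ n ih =>
    rw [cq_succ]
    exact Irrational.inv (by rw [Int.fract]; exact ih.sub_intCast _)

lemma Irrational.nz {y : ℝ} (hy : Irrational y) : y ≠ 0 := by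
  intro h
  exact (by simpa [h] using hy : Irrational (0:ℝ)) ⟨0, by norm_num⟩

lemma cq_cq (y : ℝ) (k m : ℕ) : cq (cq y k) m = cq y (k + m) := by
  induction m with
  | zero => rfl
  | succ m ih => rw [show k + (m+1) = (k+m)+1 from rfl, cq_succ, ih, cq_succ]

lemma fract_nz {y : ℝ} (hy : Irrational y) : Int.fract y ≠ 0 :=
  Irrational.nz (by rw [Int.fract]; exact hy.sub_intCast _)

open GenContFract in
lemma of_s_get : ∀ (n : ℕ) (y : ℝ), Irrational y →
    (GenContFract.of y).s.get? n = some ⟨1, (pq y (n + 1) : ℝ)⟩ := by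
  intro n
  induction n with
  | zero =>
    intro y hy
    have h := GenContFract.of_s_head (fract_nz hy)
    have : pq y 1 = ⌊(Int.fract y)⁻¹⌋ := rfl
    rw [this]
    exact h
  | succ n ih =>
    intro y hy
    rw [GenContFract.of_s_succ]
    have h1 : (Int.fract y)⁻¹ = cq y 1 := rfl
    rw [h1, ih _ (hy.cq' 1)]
    have : pq (cq y 1) (n + 1) = pq y (n + 2) := by
      unfold pq; rw [cq_cq, show 1 + (n+1) = n+2 by omega]
    rw [this]

lemma eq_of_pq_eq {y z : ℝ} (hy : Irrational y) (hz : Irrational z)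
    (h : ∀ m, pq y m = pq z m) : y = z := by
  have hof : GenContFract.of y = GenContFract.of z := by
    apply GenContFract.ext
    · rw [GenContFract.of_h_eq_floor, GenContFract.of_h_eq_floor]
      exact_mod_cast h 0
    · apply Stream'.Seq.ext
      intro n
      rw [of_s_get n y hy, of_s_get n z hz, h (n + 1)]
  have t1 := GenContFract.of_convergence (K := ℝ) y
  have t2 := GenContFract.of_convergence (K := ℝ) z
  rw [hof] at t1
  exact tendsto_nhds_unique t1 t2

open Real

lemma int_linear_eq {s : ℝ} (hs : Irrational s) {a b : ℤ} (h : (a : ℝ) * s = (b : ℝ)) :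
    a = 0 ∧ b = 0 := by
  rcases eq_or_ne a 0 with ha | ha
  · subst ha
    simp only [Int.cast_zero, zero_mul] at h
    exact ⟨rfl, by exact_mod_cast h.symm⟩
  · exact absurd (h ▸ hs.intCast_mul ha) (Int.not_irrational b)

lemma rep_unique {s : ℝ} (hs : Irrational s) {p q p' q' : ℤ}
    (hq : 0 < q) (hq' : 0 < q')
    (h : ((p : ℝ) + s) / (q : ℝ) = ((p' : ℝ) + s) / (q' : ℝ)) : p = p' ∧ q = q' := by
  have hq0 : ((q : ℝ)) ≠ 0 := by exact_mod_cast hq.ne'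
  have hq0' : ((q' : ℝ)) ≠ 0 := by exact_mod_cast hq'.ne'
  rw [div_eq_div_iff hq0 hq0'] at h
  have h2 : ((q' - q : ℤ) : ℝ) * s = ((p' * q - p * q' : ℤ) : ℝ) := by
    push_cast
    nlinarith [h]
  obtain ⟨e1, e2⟩ := int_linear_eq hs h2
  have hqq : q = q' := by omega
  subst hqq
  constructor
  · have : p * q = p' * q := by omega
    exact mul_right_cancel₀ hq.ne' this
  · rfl

/-- The quadratic surd `⌊√d⌋ + √d`. -/
noncomputable def qx (d : ℕ) : ℝ := (⌊Real.sqrt d⌋ : ℝ) + Real.sqrt d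

/-- The sequence of pairs `(u_n, v_n)`. -/
noncomputable def W (d : ℕ) : ℕ → ℤ × ℤ
  | 0 => (⌊Real.sqrt d⌋, 1)
  | n + 1 =>
    let p := W d n
    let u' := pq (qx d) n * p.2 - p.1
    (u', ((d : ℤ) - u' ^ 2) / p.2)

section
variable {d : ℕ} (hd : ¬ IsSquare d)

include hd

lemma irr_sqrt : Irrational (Real.sqrt d) := irrational_sqrt_natCast_iff.mpr hd

lemma one_lt_sqrt : 1 < Real.sqrt d := by
  have h2 : 2 ≤ d := by
    by_contra h
    interval_cases d <;> simp_all <;> exact hd ⟨0, rfl⟩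
  have : (1 : ℝ) < (d : ℝ) := by exact_mod_cast by omega
  nlinarith [Real.sq_sqrt (by positivity : (0:ℝ) ≤ (d:ℝ)), Real.sqrt_nonneg (d:ℝ)]

lemma key (n : ℕ) :
    cq (qx d) n = (((W d n).1 : ℝ) + Real.sqrt d) / ((W d n).2 : ℝ) ∧
    0 < (W d n).2 ∧ (W d n).2 ∣ (d : ℤ) - (W d n).1 ^ 2 ∧
    1 < cq (qx d) n ∧
    -1 < (((W d n).1 : ℝ) - Real.sqrt d) / ((W d n).2 : ℝ) ∧
    (((W d n).1 : ℝ) - Real.sqrt d) / ((W d n).2 : ℝ) < 0 := by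
  have hirr := irr_sqrt hd
  have hs1 := one_lt_sqrt hd
  set s := Real.sqrt d with hs
  have hsd : s ^ 2 = (d : ℝ) := Real.sq_sqrt (by positivity)
  have hflle : ((⌊s⌋ : ℝ)) ≤ s := Int.floor_le s
  have hflt : ((⌊s⌋ : ℝ)) < s := lt_of_le_of_ne hflle (fun h => hirr.ne_int ⌊s⌋ h.symm)
  have hlt1 : s < (⌊s⌋ : ℝ) + 1 := Int.lt_floor_add_one s
  have hfl1 : 1 ≤ ⌊s⌋ := Int.le_floor.mpr (by exact_mod_cast hs1.le)
  induction n with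
  | zero =>
    have hfl1' : (1 : ℝ) ≤ (⌊s⌋ : ℝ) := by exact_mod_cast hfl1
    have hcq : cq (qx d) 0 = (⌊s⌋ : ℝ) + s := rfl
    have hW : W d 0 = (⌊s⌋, 1) := rfl
    rw [hcq, hW]
    refine ⟨by norm_num, by norm_num, ?_, by linarith, ?_, ?_⟩
    · simp
    · norm_num; linarith
    · norm_num; linarith
  | succ n ih =>
    obtain ⟨hrep, hv, hdvd, hxi, het1, het2⟩ := ih
    set u := (W d n).1 with hu
    set v := (W d n).2 with hvdef
    set a := pq (qx d) n with ha
    set u' := a * v - u with hu'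
    have hW : W d (n + 1) = (u', ((d : ℤ) - u' ^ 2) / v) := rfl
    set v' := ((d : ℤ) - u' ^ 2) / v with hv'def
    have hvR : (0 : ℝ) < (v : ℝ) := by exact_mod_cast hv
    have hus : (u : ℝ) < s := by
      rcases div_neg_iff.mp het2 with ⟨h1, _⟩ | ⟨_, h2⟩
      · linarith
      · linarith
    have huv : -(v : ℝ) < (u : ℝ) - s := by
      have := (lt_div_iff₀ hvR).mp het1
      linarith
    have hu0R : (0 : ℝ) < (u : ℝ) := by
      have hxiv : 1 < ((u : ℝ) + s) / (v : ℝ) := hrep ▸ hxi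
      have h1 := (one_lt_div hvR).mp hxiv
      linarith
    have ha1 : 1 ≤ a := Int.le_floor.mpr (by exact_mod_cast hxi.le)
    have haR : (1 : ℝ) ≤ (a : ℝ) := by exact_mod_cast ha1
    have hdvd' : v ∣ (d : ℤ) - u' ^ 2 := by
      have heq : (d : ℤ) - u' ^ 2 = ((d : ℤ) - u ^ 2) - v * (a * (a * v - 2 * u)) := by
        rw [hu']; ring
      rw [heq]
      exact dvd_sub hdvd (dvd_mul_right _ _)
    have hvv' : v * v' = (d : ℤ) - u' ^ 2 := Int.mul_ediv_cancel' hdvd'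
    have hirrx : Irrational (cq (qx d) n) := by
      rw [hrep]
      exact ((hirr.intCast_add u).div_intCast hv.ne')
    have hu'R : (u' : ℝ) = (a : ℝ) * (v : ℝ) - (u : ℝ) := by rw [hu']; push_cast; ring
    have hfloor : ((⌊cq (qx d) n⌋ : ℤ) : ℝ) = (a : ℝ) := rfl
    have hfr : Int.fract (cq (qx d) n) = (s - (u' : ℝ)) / (v : ℝ) := by
      rw [Int.fract, hfloor, hrep, hu'R]
      field_simp
      ring
    have hfr0 : 0 < Int.fract (cq (qx d) n) :=
      lt_of_le_of_ne (Int.fract_nonneg _) (Ne.symm (fract_nz hirrx))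
    have hsu' : (u' : ℝ) < s := by
      rw [hfr] at hfr0
      rcases div_pos_iff.mp hfr0 with ⟨h1, _⟩ | ⟨_, h2⟩
      · linarith
      · linarith
    have hsu2 : -s < (u' : ℝ) := by nlinarith [hu'R]
    have hdu : (0 : ℝ) < (d : ℝ) - (u' : ℝ) ^ 2 := by nlinarith
    have hduZ : 0 < (d : ℤ) - u' ^ 2 := by exact_mod_cast hdu
    have hv'pos : 0 < v' := by
      by_contra hc
      push_neg at hc
      nlinarith [hvv', hduZ, hv]
    have hv'R : (0 : ℝ) < (v' : ℝ) := by exact_mod_cast hv'pos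
    have hvv'R : (v : ℝ) * (v' : ℝ) = (d : ℝ) - (u' : ℝ) ^ 2 := by exact_mod_cast hvv'
    have hrep' : cq (qx d) (n + 1) = ((u' : ℝ) + s) / (v' : ℝ) := by
      rw [cq_succ, hfr, inv_div,
        div_eq_div_iff (by linarith : (0 : ℝ) < s - (u' : ℝ)).ne' hv'R.ne']
      linear_combination hvv'R - hsd
    have heta' : ((u' : ℝ) - s) / (v' : ℝ) < 0 := div_neg_of_neg_of_pos (by linarith) hv'R
    have hvlt : (v : ℝ) < s + (u' : ℝ) := by nlinarith [hu'R]
    have hsv' : s - (u' : ℝ) < (v' : ℝ) := by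
      have h0 : (0 : ℝ) < s - (u' : ℝ) := by linarith
      have h2 : (v : ℝ) * (s - (u' : ℝ)) < (s + (u' : ℝ)) * (s - (u' : ℝ)) :=
        mul_lt_mul_of_pos_right hvlt h0
      have h3 : (s + (u' : ℝ)) * (s - (u' : ℝ)) = (v : ℝ) * (v' : ℝ) := by
        linear_combination hsd - hvv'R
      exact (mul_lt_mul_iff_right₀ hvR).mp (h2.trans_eq h3)
    have heta1' : -1 < ((u' : ℝ) - s) / (v' : ℝ) := by
      rw [lt_div_iff₀ hv'R]
      linarith
    have hxi' : 1 < cq (qx d) (n + 1) := by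
      rw [cq_succ]
      exact one_lt_inv_iff₀.mpr ⟨hfr0, Int.fract_lt_one _⟩
    rw [hW]
    dsimp only
    exact ⟨hrep', hv'pos, ⟨v, by rw [← hvv']; ring⟩, hxi', heta1', heta'⟩
end


lemma cq_qx (d : ℕ) : ∀ n, 1 ≤ n → cq (qx d) n = cq (Real.sqrt d) n := by
  intro n hn
  induction n with
  | zero => omega
  | succ n ih =>
    rcases Nat.eq_zero_or_pos n with h0 | h1
    · subst h0
      rw [cq_succ, cq_succ]
      congr 1
      show Int.fract ((⌊Real.sqrt d⌋ : ℝ) + Real.sqrt d) = Int.fract (Real.sqrt d)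
      exact Int.fract_intCast_add _ _
    · rw [cq_succ, cq_succ, ih h1]


/-- existence of the `T`-periodic sequences `(u_n)`, `(v_n)` of
positive integers with `x_n = (u_n + √d)/v_n`, `u_n ≤ a_0 = ⌊√d⌋`, and
`v_n ∣ d - u_n²`, where `(x_n)` are the complete quotients of `⌊√d⌋ + √d`. -/
theorem stmt7 (d : ℕ) (hd : ¬ IsSquare d)
    (T : ℕ) (hT : 1 ≤ T)
    (hper : ∀ n, 1 ≤ n → pq (Real.sqrt d) (n + T) = pq (Real.sqrt d) n)
    (hmin : ∀ T', 1 ≤ T' →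
      (∀ n, 1 ≤ n → pq (Real.sqrt d) (n + T') = pq (Real.sqrt d) n) → T ≤ T')
    (x : ℝ) (hx : x = (⌊Real.sqrt d⌋ : ℝ) + Real.sqrt d) :
    ∃ u v : ℕ → ℤ,
      (∀ n, 0 < u n ∧ 0 < v n) ∧
      (∀ n, u (n + T) = u n ∧ v (n + T) = v n) ∧
      (∀ n, cq x n = ((u n : ℝ) + Real.sqrt d) / (v n : ℝ) ∧
        u n ≤ ⌊Real.sqrt d⌋ ∧ v n ∣ (d : ℤ) - (u n) ^ 2) := by
  subst hx
  have hirr := irr_sqrt hd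
  have hqx_irr : Irrational (qx d) := hirr.intCast_add _
  have hxq : (⌊Real.sqrt d⌋ : ℝ) + Real.sqrt d = qx d := rfl
  simp only [hxq]
  set s := Real.sqrt d with hs
  refine ⟨fun n => (W d n).1, fun n => (W d n).2, ?_, ?_, ?_⟩
  · -- positivity
    intro n
    obtain ⟨hrep, hv, _, hxi, het1, het2⟩ := key hd n
    have hvR : (0 : ℝ) < ((W d n).2 : ℝ) := by exact_mod_cast hv
    have h1 := (one_lt_div hvR).mp (hrep ▸ hxi)
    have h2 := (lt_div_iff₀ hvR).mp het1
    have hu : (0 : ℝ) < ((W d n).1 : ℝ) := by linarith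
    exact ⟨by exact_mod_cast hu, hv⟩
  · -- periodicity
    have hcqirr : ∀ k, Irrational (cq (qx d) k) := hqx_irr.cq'
    have hpq_eq : ∀ m, 1 ≤ m → pq (qx d) m = pq s m := fun m hm => by
      unfold pq; rw [cq_qx d m hm]
    have E1 : cq (qx d) (1 + T) = cq (qx d) 1 := by
      apply eq_of_pq_eq (hcqirr _) (hcqirr _)
      intro m
      have a1 : pq (cq (qx d) (1 + T)) m = pq (qx d) (1 + T + m) := by
        unfold pq; rw [cq_cq]
      have a2 : pq (cq (qx d) 1) m = pq (qx d) (1 + m) := by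
        unfold pq; rw [cq_cq]
      rw [a1, a2, hpq_eq _ (by omega), hpq_eq _ (by omega),
        show 1 + T + m = (1 + m) + T by omega, hper (1 + m) (by omega)]
    have hfr_eq : Int.fract (cq (qx d) T) = Int.fract (cq (qx d) 0) := by
      have h1 : cq (qx d) (T + 1) = cq (qx d) (0 + 1) := by
        rw [show T + 1 = 1 + T by omega, E1]
      rw [cq_succ, cq_succ] at h1
      exact inv_injective h1
    obtain ⟨hrepT, hvT, _, _, hetaT1, hetaT2⟩ := key hd T
    obtain ⟨hrep0, hv0, _, _, heta01, heta02⟩ := key hd 0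
    set k := ⌊cq (qx d) T⌋ - ⌊cq (qx d) 0⌋ with hk
    have hdiff : cq (qx d) T - cq (qx d) 0 = (k : ℝ) := by
      rw [Int.fract, Int.fract] at hfr_eq
      push_cast [hk]
      linarith
    have hv0R : (0 : ℝ) < ((W d 0).2 : ℝ) := by exact_mod_cast hv0
    have hrep0' : cq (qx d) T =
        ((((W d 0).1 + k * (W d 0).2 : ℤ) : ℝ) + s) / (((W d 0).2 : ℤ) : ℝ) := by
      have : cq (qx d) T = cq (qx d) 0 + (k : ℝ) := by linarith
      rw [this, hrep0]
      push_cast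
      field_simp
      rw [← hs]
      ring
    obtain ⟨hpe, hqe⟩ := rep_unique hirr hvT hv0 (hrepT.symm.trans hrep0')
    have hkR : ((W d T).1 : ℝ) = ((W d 0).1 : ℝ) + (k : ℝ) * ((W d 0).2 : ℝ) := by
      exact_mod_cast congrArg (fun z : ℤ => (z : ℝ)) hpe
    have hvTR : (0 : ℝ) < ((W d T).2 : ℝ) := by exact_mod_cast hvT
    have hT1 := (lt_div_iff₀ hvTR).mp hetaT1
    have hT2 : ((W d T).1 : ℝ) - s < 0 := by
      rcases div_neg_iff.mp hetaT2 with ⟨h1, _⟩ | ⟨_, h2⟩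
      · linarith
      · linarith
    have h01 := (lt_div_iff₀ hv0R).mp heta01
    have h02 : ((W d 0).1 : ℝ) - s < 0 := by
      rcases div_neg_iff.mp heta02 with ⟨h1, _⟩ | ⟨_, h2⟩
      · linarith
      · linarith
    have hqeR : ((W d T).2 : ℝ) = ((W d 0).2 : ℝ) := by exact_mod_cast hqe
    have hk0 : k = 0 := by
      have hb1 : -1 < (k : ℝ) := by nlinarith [hkR, hqeR, hT1, h02, hv0R]
      have hb2 : (k : ℝ) < 1 := by nlinarith [hkR, hqeR, hT2, h01, hv0R]
      have : -1 < k ∧ k < 1 := ⟨by exact_mod_cast hb1, by exact_mod_cast hb2⟩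
      omega
    have E0 : cq (qx d) T = cq (qx d) 0 := by
      have : (k : ℝ) = 0 := by exact_mod_cast hk0
      linarith [hdiff, this]
    have per : ∀ n, cq (qx d) (n + T) = cq (qx d) n := by
      intro n
      induction n with
      | zero => simpa using E0
      | succ n ih => rw [show n + 1 + T = (n + T) + 1 by omega, cq_succ, cq_succ, ih]
    intro n
    obtain ⟨hrepn, hvn, _, _, _, _⟩ := key hd n
    obtain ⟨hrepnT, hvnT, _, _, _, _⟩ := key hd (n + T)
    exact rep_unique hirr hvnT hvn (hrepnT.symm.trans ((per n).trans hrepn))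
  · intro n
    obtain ⟨hrep, hv, hdvd, _, _, het2⟩ := key hd n
    have hvR : (0 : ℝ) < ((W d n).2 : ℝ) := by exact_mod_cast hv
    have hus : ((W d n).1 : ℝ) < s := by
      rcases div_neg_iff.mp het2 with ⟨h1, _⟩ | ⟨_, h2⟩
      · linarith
      · linarith
    exact ⟨hrep, Int.le_floor.mpr hus.le, hdvd⟩
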